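/- Let (X',d') be a metric space and equip X' × ℝ with the distance D((x',t),(y',s)) := sqrt(d'(x',y')² + |t-s|²). Let T: X' × ℝ → X be defined via a one-parameter group of isometries F_t of a metric space (X,d) with a section ι: X' → X (i.e. T(x',t) = F_{-t}(ι(x'))) satisfying d'(x',y') ≤ d(ι(x'),ι(y')) and d(F_t(x),x) = |t|. Then (1/√2)·D((x'_1,t_1),(x'_2,t_2)) ≤ d(T(x'_1,t_1), T(x'_2,t_2)) ≤ √2·D((x'_1,t_1),(x'_2,t_2)), provided additionally that the projections π: X → X' and b: X → ℝ (with b(F_t(x)) = b(x) - t, π ∘ T(x',t) = x', b ∘ T(x',t) = t) are both 1-Lipschitz and d(ι(x'),ι(y')) = d'(x',y'). -/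
import Mathlib


/-- The maps `T : X' × ℝ → X` and `S = (π, b)` are bi-Lipschitz with constants `√2`
with respect to the product distance `D((x',t),(y',s)) = √(d'(x',y')² + |t-s|²)`. -/
theorem stmt_8 {X X' : Type*} [MetricSpace X] [MetricSpace X']
    (F : ℝ → X → X) (ι : X' → X) (π : X → X') (b : X → ℝ)
    (hiso : ∀ (t : ℝ) (x y : X), dist (F t x) (F t y) = dist x y)
    (hgroup : ∀ (t s : ℝ) (x : X), F t (F s x) = F (t + s) x)
    (hzero : ∀ x : X, F 0 x = x)
    (hspeed : ∀ (t : ℝ) (x : X), dist (F t x) x = |t|)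
    (hι : ∀ x' y' : X', dist (ι x') (ι y') = dist x' y')
    (hπ : LipschitzWith 1 π) (hb : LipschitzWith 1 b)
    (hbF : ∀ (t : ℝ) (x : X), b (F t x) = b x - t)
    (T : X' × ℝ → X) (hT : ∀ (x' : X') (t : ℝ), T (x', t) = F (-t) (ι x'))
    (hπT : ∀ (x' : X') (t : ℝ), π (T (x', t)) = x')
    (hbT : ∀ (x' : X') (t : ℝ), b (T (x', t)) = t) :
    ∀ (x'₁ x'₂ : X') (t₁ t₂ : ℝ),
      (1 / Real.sqrt 2) * Real.sqrt (dist x'₁ x'₂ ^ 2 + |t₁ - t₂| ^ 2) ≤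
          dist (T (x'₁, t₁)) (T (x'₂, t₂)) ∧
        dist (T (x'₁, t₁)) (T (x'₂, t₂)) ≤
          Real.sqrt 2 * Real.sqrt (dist x'₁ x'₂ ^ 2 + |t₁ - t₂| ^ 2) := by
  intro x'₁ x'₂ t₁ t₂
  set d := dist (T (x'₁, t₁)) (T (x'₂, t₂)) with hd
  have hd0 : 0 ≤ d := dist_nonneg
  have h1 : dist x'₁ x'₂ ≤ d := by
    have := hπ.dist_le_mul (T (x'₁, t₁)) (T (x'₂, t₂))
    simpa [hπT] using this
  have h2 : |t₁ - t₂| ≤ d := by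
    have := hb.dist_le_mul (T (x'₁, t₁)) (T (x'₂, t₂))
    simpa [hbT, Real.dist_eq] using this
  constructor
  · rw [div_mul_eq_mul_div, one_mul, div_le_iff₀ (by positivity)]
    have : dist x'₁ x'₂ ^ 2 + |t₁ - t₂| ^ 2 ≤ (d * Real.sqrt 2) ^ 2 := by
      have e : (d * Real.sqrt 2) ^ 2 = 2 * d ^ 2 := by
        rw [mul_pow, Real.sq_sqrt (by norm_num : (0:ℝ) ≤ 2)]; ring
      have q1 := mul_self_le_mul_self dist_nonneg h1
      have q2 := mul_self_le_mul_self (abs_nonneg (t₁ - t₂)) h2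
      rw [e]; nlinarith
    calc Real.sqrt (dist x'₁ x'₂ ^ 2 + |t₁ - t₂| ^ 2) ≤ Real.sqrt ((d * Real.sqrt 2) ^ 2) :=
          Real.sqrt_le_sqrt this
      _ = d * Real.sqrt 2 := Real.sqrt_sq (by positivity)
  · have key : d ≤ dist x'₁ x'₂ + |t₁ - t₂| := by
      have e1 : T (x'₁, t₁) = F (-t₁) (ι x'₁) := hT _ _
      have e2 : T (x'₂, t₂) = F (-t₂) (ι x'₂) := hT _ _
      have : d = dist (ι x'₁) (F (t₁ - t₂) (ι x'₂)) := by
        rw [hd, e1, e2, ← hiso t₁]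
        rw [hgroup, hgroup]
        ring_nf
        rw [hzero]
      rw [this]
      calc dist (ι x'₁) (F (t₁ - t₂) (ι x'₂))
          ≤ dist (ι x'₁) (ι x'₂) + dist (ι x'₂) (F (t₁ - t₂) (ι x'₂)) := dist_triangle _ _ _
        _ = dist x'₁ x'₂ + |t₁ - t₂| := by
            rw [hι, dist_comm (ι x'₂), hspeed]
    have sum_le : dist x'₁ x'₂ + |t₁ - t₂| ≤
        Real.sqrt 2 * Real.sqrt (dist x'₁ x'₂ ^ 2 + |t₁ - t₂| ^ 2) := by
      rw [← Real.sqrt_mul (by norm_num : (0:ℝ) ≤ 2)]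
      rw [show (dist x'₁ x'₂ + |t₁ - t₂| : ℝ) = Real.sqrt ((dist x'₁ x'₂ + |t₁ - t₂|) ^ 2) from
        (Real.sqrt_sq (by positivity)).symm]
      apply Real.sqrt_le_sqrt
      nlinarith [sq_nonneg (dist x'₁ x'₂ - |t₁ - t₂|)]
    linarith
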